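/- Let C = x·I + y·P₂ + (1−x−y)·P₃ be a rational orthogonal circulant matrix (x, y ∈ ℚ, x² + y² − x − y + xy = 0). If all eigenvalues of C are roots of unity, then x ∈ {1, −1/3, 2/3, 0}; consequently C is a permutation matrix or one of the Grover-type matrices (2/3)J − P for a permutation matrix P. -/

import Mathlib

open Matrix

noncomputable def P2 : Matrix (Fin 3) (Fin 3) ℚ := !![0,1,0; 0,0,1; 1,0,0]
noncomputable def P3 : Matrix (Fin 3) (Fin 3) ℚ := !![0,0,1; 1,0,0; 0,1,0]

/-- A primitive cube root of unity. -/
noncomputable def cubeRoot : ℂ := ⟨-1/2, Real.sqrt 3 / 2⟩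

lemma cubeRoot_sq : cubeRoot^2 = -cubeRoot - 1 := by
  apply Complex.ext <;>
  simp [cubeRoot, pow_two, Complex.mul_re, Complex.mul_im] <;>
  nlinarith [Real.sq_sqrt (by norm_num : (3:ℝ) ≥ 0), Real.sqrt_nonneg 3]

lemma cubeRoot_cube : cubeRoot^3 = 1 := by
  linear_combination (cubeRoot - 1) * cubeRoot_sq

lemma cubeRoot_conj : (starRingEnd ℂ) cubeRoot = -cubeRoot - 1 := by
  apply Complex.ext <;> simp [cubeRoot] <;> norm_num

lemma isIntegral_of_pow_eq_one (μ : ℂ) (n : ℕ) (hn : 0 < n) (h : μ ^ n = 1) :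
    IsIntegral ℤ μ := by
  refine ⟨Polynomial.X ^ n - Polynomial.C 1, ?_, ?_⟩
  · exact Polynomial.monic_X_pow_sub_C 1 (by omega)
  · simp [h]

lemma no_rat_sq (q : ℚ) (hq : 3 * q^2 = 4) : False := by
  have hirr : Irrational (Real.sqrt 3) := by
    have := Nat.prime_three.irrational_sqrt
    simpa using this
  set r : ℚ := |q| * 3 / 2 with hr
  have hr0 : (0:ℝ) ≤ (r:ℝ) := by positivity
  have hq' : 3 * (q:ℝ)^2 = 4 := by exact_mod_cast hq
  have hr2 : ((r:ℝ))^2 = 3 := by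
    rw [hr]; push_cast
    rw [div_pow, mul_pow, sq_abs]
    nlinarith [hq']
  have : Real.sqrt 3 = (r:ℝ) := by rw [← hr2, Real.sqrt_sq hr0]
  exact hirr ⟨r, this.symm⟩

theorem stmt_18 (x y : ℚ) (h : x ^ 2 + y ^ 2 - x - y + x * y = 0)
    (C : Matrix (Fin 3) (Fin 3) ℚ)
    (hC : C = x • (1 : Matrix (Fin 3) (Fin 3) ℚ) + y • P2 + (1 - x - y) • P3)
    (hroots : ∀ μ ∈ spectrum ℂ (C.map (algebraMap ℚ ℂ)), ∃ n : ℕ, 0 < n ∧ μ ^ n = 1) :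
    x = 1 ∨ x = -1/3 ∨ x = 2/3 ∨ x = 0 := by
  set w : ℂ := cubeRoot with hwdef
  have hw2 : w^2 = -w - 1 := cubeRoot_sq
  have hw3 : w^3 = 1 := cubeRoot_cube
  have hws : (starRingEnd ℂ) w = -w - 1 := cubeRoot_conj
  set μ : ℂ := (x:ℂ) + y * w + (1 - x - y) * w^2 with hμ
  -- μ is an eigenvalue of C
  have hspec : μ ∈ spectrum ℂ (C.map (algebraMap ℚ ℂ)) := by
    have hsub : (algebraMap ℂ (Matrix (Fin 3) (Fin 3) ℂ)) μ - C.map (algebraMap ℚ ℂ)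
        = !![μ - x, -y, -(1-x-y); -(1-x-y), μ - x, -y; -y, -(1-x-y), μ - x] := by
      subst hC
      ext i j
      fin_cases i <;> fin_cases j <;>
        simp [Matrix.algebraMap_matrix_apply, Matrix.map_apply, P2, P3, Matrix.vecHead,
          Matrix.vecTail, Matrix.add_apply, Matrix.smul_apply, Matrix.one_apply] <;>
        push_cast <;> ring
    rw [spectrum.mem_iff]
    intro hU
    rw [Matrix.isUnit_iff_isUnit_det, hsub] at hU
    have hdet : (!![μ - x, -y, -(1-x-y); -(1-x-y), μ - x, -y; -y, -(1-x-y), μ - x] :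
        Matrix (Fin 3) (Fin 3) ℂ).det = 0 := by
      rw [Matrix.det_fin_three]
      simp
      norm_num [hμ]
      linear_combination ((y:ℂ)^3 + 3*y^2*(1-x-y)*w + 3*y*(1-x-y)^2*w^2
        + (1-(x:ℂ)-y)^3*(w^3+1)) * hw3
    rw [hdet] at hU
    exact (by simp : ¬ IsUnit (0:ℂ)) hU
  obtain ⟨n, hn, hpow⟩ := hroots μ hspec
  -- the trace-like quantity μ + conj μ = 3x - 1 is an algebraic integer
  have htr : μ + (starRingEnd ℂ) μ = ((3*x - 1 : ℚ) : ℂ) := by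
    rw [hμ]
    simp only [_root_.map_add, _root_.map_mul, _root_.map_pow, _root_.map_sub, _root_.map_one, Complex.conj_ofReal, hws]
    push_cast
    rw [map_ratCast, map_ratCast]
    linear_combination ((1:ℂ) - x - y) * 2 * hw2
  have hint : IsIntegral ℤ ((3*x - 1 : ℚ) : ℂ) := by
    rw [← htr]
    exact (isIntegral_of_pow_eq_one μ n hn hpow).add
      ((isIntegral_of_pow_eq_one μ n hn hpow).map ((starRingEnd ℂ).toIntAlgHom))
  have hint2 : IsIntegral ℤ (3*x - 1 : ℚ) := by
    rwa [show ((3*x-1 : ℚ) : ℂ) = algebraMap ℚ ℂ (3*x-1) from rfl,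
      isIntegral_algebraMap_iff (algebraMap ℚ ℂ).injective] at hint
  obtain ⟨k, hk⟩ := IsIntegrallyClosed.isIntegral_iff.mp hint2
  have hk' : (k : ℚ) = 3*x - 1 := by rw [← hk]; simp
  -- |μ| = 1 hence |3x-1| ≤ 2
  have habs : ‖μ‖ = 1 := by
    have h1 : ‖μ‖ ^ n = 1 := by
      rw [← norm_pow, hpow, norm_one]
    rcases (pow_eq_one_iff_cases.mp h1) with h' | h' | h'
    · omega
    · exact h'
    · exfalso; have := norm_nonneg μ; rw [h'.1] at this; linarith
  have hb : |(k:ℚ)| ≤ 2 := by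
    have h2 : ‖μ + (starRingEnd ℂ) μ‖ ≤ 2 := by
      calc ‖μ + (starRingEnd ℂ) μ‖
          ≤ ‖μ‖ + ‖(starRingEnd ℂ) μ‖ := norm_add_le _ _
        _ = 2 := by rw [Complex.norm_conj, habs]; norm_num
    rw [htr, show ((3*x-1:ℚ):ℂ) = (((3*x-1:ℚ):ℝ):ℂ) by norm_cast, Complex.norm_real, Real.norm_eq_abs] at h2
    have : |(3*x - 1 : ℚ)| ≤ 2 := by exact_mod_cast h2
    rwa [← hk'] at this
  have hb2 := abs_le.mp hb
  have hk2 : k ≤ 2 := by exact_mod_cast hb2.2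
  have hkm2 : -2 ≤ k := by exact_mod_cast hb2.1
  -- exclude k = 0, i.e. x = 1/3
  have hknz : k ≠ 0 := by
    intro hk0
    rw [hk0] at hk'
    have hx : 3*x - 1 = 0 := by exact_mod_cast hk'.symm
    have hμ' : μ = ((x:ℂ) - (1-x-y)) + ((y:ℂ) - (1-x-y)) * w := by
      rw [hμ]; linear_combination ((1:ℂ)-x-y) * hw2
    have hre : μ.re = ((x:ℝ) - (1-x-y)) - ((y:ℝ) - (1-x-y))/2 := by
      rw [hμ', hwdef]
      simp [Complex.add_re, Complex.mul_re, cubeRoot] <;> push_cast <;> ring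
    have him : μ.im = ((y:ℝ) - (1-x-y)) * (Real.sqrt 3 / 2) := by
      rw [hμ', hwdef]
      simp [Complex.add_im, Complex.mul_im, cubeRoot] <;> push_cast <;> ring
    have hre0 : μ.re = 0 := by
      rw [hre]
      have : (3*(x:ℝ) - 1) = 0 := by exact_mod_cast hx
      linarith
    have hnsq : μ.re^2 + μ.im^2 = 1 := by
      have := Complex.sq_norm μ
      rw [habs, Complex.normSq_apply] at this
      nlinarith [this]
    rw [hre0, him] at hnsq
    have h3 : ((x:ℝ) + 2*y - 1)^2 * 3 = 4 := by
      have hs : Real.sqrt 3 ^ 2 = 3 := Real.sq_sqrt (by norm_num)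
      nlinarith [hnsq, hs]
    apply no_rat_sq (x + 2*y - 1)
    have : ((3 * (x+2*y-1)^2 : ℚ) : ℝ) = ((4:ℚ):ℝ) := by push_cast; nlinarith [h3]
    exact_mod_cast this
  interval_cases k <;> push_cast at hk'
  · right; left; linarith [hk']
  · right; right; right; linarith [hk']
  · omega
  · right; right; left; linarith [hk']
  · left; linarith [hk']
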